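/- Chained Bell inequality non-signalling privacy bound: let P_{XYZ|ABC} be a non-signalling conditional distribution with X, Y binary, A ∈ {0,2,...,2N−2}, B ∈ {1,3,...,2N−1}, and define I_N := P(X=Y|A=0,B=2N−1) + ∑_{|a−b|=1} P(X≠Y|A=a,B=b). Then for all a, b, c, x (with positive probability), D(P_{Z|abcx}, P_{Z|abc}) ≤ I_N. -/

import Mathlib

open Finset
open Fin.NatCast

/-- Variational distance between two distributions on a finite alphabet. -/
noncomputable def varDist {α : Type*} [Fintype α] (p q : α → ℝ) : ℝ :=
  (1 / 2) * ∑ a, |p a - q a|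

/-- The chained Bell quantity `I_N` for a conditional distribution `Q` of binary outcomes
`(X,Y)` given settings `(A,B)`.  The settings `A ∈ {0,2,…,2N}` are indexed by
`a : Fin (N+1)` (setting `2a`) and `B ∈ {1,3,…,2N+1}` by `b : Fin (N+1)` (setting `2b+1`);
`|A − B| = 1` holds exactly for the pairs `(a, b) = (i, i)` and `(a, b) = (i+1, i)`.
`I_N := P(X=Y | A=0, B=2N+1) + ∑_{|A−B|=1} P(X≠Y | A, B)`. -/
noncomputable def chainedBell {N : ℕ} (Q : Fin (N + 1) → Fin (N + 1) → Fin 2 → Fin 2 → ℝ) :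
    ℝ :=
  (∑ x, Q 0 (Fin.last N) x x)
    + ∑ i : Fin (N + 1), ∑ x, ∑ y, (if x ≠ y then Q i i x y else 0)
    + ∑ i : Fin N, ∑ x, ∑ y, (if x ≠ y then Q i.succ i.castSucc x y else 0)

/-- Chained Bell inequality non-signalling privacy bound: for any non-signalling
conditional distribution `P_{XYZ|ABC}` with binary `X, Y` and chained-Bell settings,
`D(P_{Z|abcx}, P_{Z|abc}) ≤ I_N(P_{XY|AB})` for all `a, b, c, x` with positive
probability. -/

private lemma abs_sub_le_add (a b : ℝ) (ha : 0 ≤ a) (hb : 0 ≤ b) : |a - b| ≤ a + b := by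
  rw [abs_sub_le_iff]; constructor <;> linarith

private lemma fin2_sum (x : Fin 2) (h : Fin 2 → ℝ) : ∑ y, h y = h x + h (x + 1) := by
  fin_cases x <;> simp [Fin.sum_univ_two] <;> ring

private lemma fin2_offdiag (x : Fin 2) (h : Fin 2 → Fin 2 → ℝ) :
    ∑ a, ∑ b, (if a ≠ b then h a b else 0) = h x (x + 1) + h (x + 1) x := by
  fin_cases x <;> simp [Fin.sum_univ_two] <;> ring

private lemma fin2_add11 (x : Fin 2) : x + 1 + 1 = x := by fin_cases x <;> rfl

private lemma chainD {ζ : Type*} [Fintype ζ] (u : ℕ → ζ → ℝ) (e : ℕ → ℝ) (j : ℕ) :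
    ∀ k, j ≤ k → (∀ m, j ≤ m → m < k → (∑ z, |u m z - u (m + 1) z|) ≤ e m) →
    (∑ z, |u j z - u k z|) ≤ ∑ m ∈ Finset.Ico j k, e m := by
  intro k hk
  induction k, hk using Nat.le_induction with
  | base => intro _; simp
  | succ k hk ih =>
    intro h
    rw [Finset.sum_Ico_succ_top hk]
    calc (∑ z, |u j z - u (k+1) z|)
        ≤ ∑ z, (|u j z - u k z| + |u k z - u (k+1) z|) :=
          Finset.sum_le_sum fun z _ => abs_sub_le _ _ _
      _ = (∑ z, |u j z - u k z|) + ∑ z, |u k z - u (k+1) z| := Finset.sum_add_distrib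
      _ ≤ (∑ m ∈ Finset.Ico j k, e m) + e k :=
          add_le_add (ih fun m hm hm' => h m hm (by omega)) (h k hk (by omega))

private lemma sum_range_two_mul (e : ℕ → ℝ) (n : ℕ) :
    ∑ m ∈ Finset.range (2 * n), e m = ∑ i ∈ Finset.range n, (e (2 * i) + e (2 * i + 1)) := by
  induction n with
  | zero => simp
  | succ n ih =>
    rw [Finset.sum_range_succ, ← ih, show 2*(n+1) = 2*n+1+1 by ring,
      Finset.sum_range_succ, Finset.sum_range_succ]
    ring

private lemma sum_Ico_shift (e : ℕ → ℝ) (p : ℕ) :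
    ∀ k, (∀ i < k, e (p + i) = e i) → ∑ m ∈ Finset.Ico k (k + p), e m = ∑ m ∈ Finset.range p, e m := by
  rcases Nat.eq_zero_or_pos p with hp | hp
  · intro k _; simp [hp]
  intro k
  induction k with
  | zero => intro _; rw [Finset.range_eq_Ico]; simp
  | succ k ih =>
    intro h
    have h1 : ∑ m ∈ Finset.Ico (k+1) (k+1+p), e m
        = ∑ m ∈ Finset.Ico (k+1) (k+p), e m + e (k+p) := by
      rw [show k+1+p = k+p+1 by ring, Finset.sum_Ico_succ_top (by omega)]
    have h2 : ∑ m ∈ Finset.Ico k (k+p), e m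
        = e k + ∑ m ∈ Finset.Ico (k+1) (k+p), e m := by
      rw [Finset.sum_eq_sum_Ico_succ_bot (by omega)]
    have h3 : e (k + p) = e k := by rw [show k + p = p + k by ring]; exact h k (by omega)
    rw [h1, h3]
    have := ih (fun i hi => h i (by omega))
    linarith
section ChainedBellAux

variable {N : ℕ} {γ ζ : Type*} [Fintype ζ]
  (P : Fin (N + 1) → Fin (N + 1) → γ → Fin 2 → Fin 2 → ζ → ℝ) (c : γ) (x : Fin 2)

private noncomputable def ff (i : ℕ) (z : ζ) : ℝ := ∑ y, P i i c x y z
private noncomputable def gg (i : ℕ) (z : ζ) : ℝ := ∑ x', P i i c x' x z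
private noncomputable def EE (i : ℕ) : ℝ :=
  ∑ x1, ∑ y1, (if x1 ≠ y1 then ∑ z, P i i c x1 y1 z else 0)
private noncomputable def FF (i : ℕ) : ℝ :=
  ∑ x1, ∑ y1, (if x1 ≠ y1 then ∑ z, P (↑(i+1)) (↑i) c x1 y1 z else 0)
private noncomputable def TT : ℝ := ∑ x1, ∑ z, P 0 (Fin.last N) c x1 x1 z

private noncomputable def uu (m : ℕ) (z : ζ) : ℝ :=
  if m < 2*N+2 then
    (if m % 2 = 0 then ff P c x (m/2) z else gg P c x (m/2) z)
  else
    (if m % 2 = 0 then ff P c (x+1) ((m-(2*N+2))/2) z else gg P c (x+1) ((m-(2*N+2))/2) z)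

private noncomputable def ee (m : ℕ) : ℝ :=
  if m = 2*N+1 then TT P c
  else if m % 2 = 0 then EE P c (m % (2*N+2) / 2) else FF P c (m % (2*N+2) / 2)

private lemma uu_even_small (i : ℕ) (hi : i ≤ N) : uu P c x (2*i) = ff P c x i := by
  funext z
  have h1 : 2*i < 2*N+2 := by omega
  have h2 : 2*i % 2 = 0 := by omega
  have h3 : 2*i / 2 = i := by omega
  simp [uu, h1, h2, h3]

private lemma uu_odd_small (i : ℕ) (hi : i ≤ N) : uu P c x (2*i+1) = gg P c x i := by
  funext z
  have h1 : 2*i+1 < 2*N+2 := by omega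
  have h2 : (2*i+1) % 2 = 1 := by omega
  have h3 : (2*i+1) / 2 = i := by omega
  simp [uu, h1, h2, h3]

private lemma uu_even_big (i : ℕ) : uu P c x (2*N+2+2*i) = ff P c (x+1) i := by
  funext z
  have h1 : ¬ (2*N+2+2*i < 2*N+2) := by omega
  have h2 : (2*N+2+2*i) % 2 = 0 := by omega
  have h3 : (2*N+2+2*i - (2*N+2)) / 2 = i := by omega
  simp [uu, h1, h2, h3]

private lemma uu_odd_big (i : ℕ) : uu P c x (2*N+2+(2*i+1)) = gg P c (x+1) i := by
  funext z
  have h1 : ¬ (2*N+2+(2*i+1) < 2*N+2) := by omega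
  have h2 : (2*N+2+(2*i+1)) % 2 = 1 := by omega
  have h3 : (2*N+2+(2*i+1) - (2*N+2)) / 2 = i := by omega
  have h3' : (2*i+1) / 2 = i := by omega
  simp [uu, h1, h2, h3, h3']

private lemma ee_even (i : ℕ) (hi : i ≤ N) : ee P c (2*i) = EE P c i := by
  have h1 : 2*i ≠ 2*N+1 := by omega
  have h2 : 2*i % 2 = 0 := by omega
  have h3 : 2*i % (2*N+2) = 2*i := Nat.mod_eq_of_lt (by omega)
  have h4 : 2*i/2 = i := by omega
  simp [ee, h1, h2, h3, h4]

private lemma ee_odd (i : ℕ) (hi : i < N) : ee P c (2*i+1) = FF P c i := by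
  have h1 : 2*i+1 ≠ 2*N+1 := by omega
  have h2 : (2*i+1) % 2 = 1 := by omega
  have h3 : (2*i+1) % (2*N+2) = 2*i+1 := Nat.mod_eq_of_lt (by omega)
  have h4 : (2*i+1)/2 = i := by omega
  simp [ee, h1, h2, h3, h4]
  intro h; omega

private lemma ee_anchor : ee P c (2*N+1) = TT P c := by simp [ee]

private lemma ee_shift (i : ℕ) (hi : i < 2*N+1) : ee P c (2*N+2+i) = ee P c i := by
  have h1 : 2*N+2+i ≠ 2*N+1 := by omega
  have h2 : i ≠ 2*N+1 := by omega
  have h3 : (2*N+2+i) % (2*N+2) = i := by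
    rw [Nat.add_mod_left]; exact Nat.mod_eq_of_lt (by omega)
  have h4 : i % (2*N+2) = i := Nat.mod_eq_of_lt (by omega)
  have h5 : (2*N+2+i) % 2 = i % 2 := by omega
  simp [ee, h1, h2, h3, h4, h5]

private lemma offdiag_bound (A B : Fin (N + 1)) (v w : ζ → ℝ) (s t : Fin 2)
    (hst : t = s + 1)
    (hP0 : ∀ a b c x y z, 0 ≤ P a b c x y z)
    (hvw : ∀ z, v z - w z = P A B c s t z - P A B c t s z) :
    ∑ z, |v z - w z| ≤ ∑ x1, ∑ y1, (if x1 ≠ y1 then ∑ z, P A B c x1 y1 z else 0) := by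
  subst hst
  have hE : (∑ x1, ∑ y1, (if x1 ≠ y1 then ∑ z, P A B c x1 y1 z else 0))
      = (∑ z, P A B c s (s+1) z) + (∑ z, P A B c (s+1) s z) :=
    fin2_offdiag s (fun a b => ∑ z, P A B c a b z)
  rw [hE, ← Finset.sum_add_distrib]
  refine Finset.sum_le_sum fun z _ => ?_
  rw [hvw z]
  exact abs_sub_le_add _ _ (hP0 _ _ _ _ _ _) (hP0 _ _ _ _ _ _)

end ChainedBellAux
section ChainedBellEdges

variable {N : ℕ} {γ ζ : Type*} [Fintype ζ]

private lemma fin2_ne (x : Fin 2) : x ≠ x + 1 := by fin_cases x <;> decide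

private lemma cast_last {N : ℕ} : ((N : ℕ) : Fin (N+1)) = Fin.last N := by
  ext
  simp [Fin.val_natCast, Nat.mod_eq_of_lt (Nat.lt_succ_self N)]

private lemma edge_bound
    (P : Fin (N + 1) → Fin (N + 1) → γ → Fin 2 → Fin 2 → ζ → ℝ) (c : γ) (x : Fin 2)
    (hP0 : ∀ a b c x y z, 0 ≤ P a b c x y z)
    (hNS2 : ∀ a b b' c x z, ∑ y, P a b c x y z = ∑ y, P a b' c x y z)
    (hNS3 : ∀ a a' b c y z, ∑ x, P a b c x y z = ∑ x, P a' b c x y z)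
    (m : ℕ) (hm : m < 2*(2*N+1)) :
    (∑ z, |uu P c x m z - uu P c x (m+1) z|) ≤ ee P c m := by
  rcases Nat.lt_or_ge m (2*N+2) with hs | hb
  · rcases Nat.even_or_odd m with ⟨i, hi⟩ | ⟨i, hi⟩
    · -- even small : E edge (ff x i , gg x i)
      have hiN : i ≤ N := by omega
      have hm2 : m = 2*i := by omega
      rw [hm2, show 2*i+1 = 2*i+1 from rfl, uu_even_small P c x i hiN,
        uu_odd_small P c x i hiN, ee_even P c i hiN]
      refine offdiag_bound P c (↑i) (↑i) _ _ x (x+1) rfl hP0 fun z => ?_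
      have h1 : ff P c x i z = P ↑i ↑i c x x z + P ↑i ↑i c x (x+1) z :=
        fin2_sum x (fun y => P ↑i ↑i c x y z)
      have h2 : gg P c x i z = P ↑i ↑i c x x z + P ↑i ↑i c (x+1) x z :=
        fin2_sum x (fun t => P ↑i ↑i c t x z)
      rw [h1, h2]; ring
    · -- odd small
      have hm2 : m = 2*i+1 := by omega
      rcases Nat.lt_or_ge i N with hiN | hiN
      · -- F edge (gg x i , ff x (i+1))
        rw [hm2, show 2*i+1+1 = 2*(i+1) by ring, uu_odd_small P c x i (by omega),
          uu_even_small P c x (i+1) (by omega), ee_odd P c i hiN]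
        refine offdiag_bound P c (↑(i+1)) (↑i) _ _ (x+1) x (fin2_add11 x).symm hP0 fun z => ?_
        have h1 : gg P c x i z = P ↑(i+1) ↑i c x x z + P ↑(i+1) ↑i c (x+1) x z := by
          have := hNS3 (↑i) (↑(i+1)) (↑i) c x z
          have h2 : (∑ x', P (↑(i+1)) (↑i) c x' x z)
              = P ↑(i+1) ↑i c x x z + P ↑(i+1) ↑i c (x+1) x z :=
            fin2_sum x (fun t => P ↑(i+1) ↑i c t x z)
          rw [gg, this]; exact h2
        have h3 : ff P c x (i+1) z = P ↑(i+1) ↑i c x x z + P ↑(i+1) ↑i c x (x+1) z := by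
          have := hNS2 (↑(i+1)) (↑(i+1)) (↑i) c x z
          have h4 : (∑ y, P (↑(i+1)) (↑i) c x y z)
              = P ↑(i+1) ↑i c x x z + P ↑(i+1) ↑i c x (x+1) z :=
            fin2_sum x (fun y => P ↑(i+1) ↑i c x y z)
          rw [ff, this]; exact h4
        rw [h1, h3]; ring
      · -- anchor : i = N
        have hiN' : i = N := by omega
        subst hiN'
        rw [hm2, show 2*i+1+1 = 2*i+2+2*0 by ring, uu_odd_small P c x i le_rfl,
          uu_even_big P c x 0, ee_anchor]
        have key : ∀ z, gg P c x i z - ff P c (x+1) 0 z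
            = P 0 (Fin.last i) c x x z - P 0 (Fin.last i) c (x+1) (x+1) z := by
          intro z
          have hg : gg P c x i z
              = P 0 (Fin.last i) c x x z + P 0 (Fin.last i) c (x+1) x z := by
            have h0 := hNS3 (↑i) 0 (↑i) c x z
            have h2 : (∑ x', P 0 (↑i : Fin (i+1)) c x' x z)
                = P 0 ↑i c x x z + P 0 ↑i c (x+1) x z :=
              fin2_sum x (fun t => P 0 (↑i : Fin (i+1)) c t x z)
            rw [gg, h0, h2, cast_last]
          have hf : ff P c (x+1) 0 z
              = P 0 (Fin.last i) c (x+1) (x+1) z + P 0 (Fin.last i) c (x+1) x z := by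
            have h0 := hNS2 0 0 (Fin.last i) c (x+1) z
            have h2 : (∑ y, P 0 (Fin.last i) c (x+1) y z)
                = P 0 (Fin.last i) c (x+1) (x+1) z + P 0 (Fin.last i) c (x+1) x z := by
              have := fin2_sum (x+1) (fun y => P 0 (Fin.last i) c (x+1) y z)
              rwa [fin2_add11 x] at this
            simp only [ff, Nat.cast_zero]
            rw [h0, h2]
          rw [hg, hf]; ring
        have hT : TT P c = (∑ z, P 0 (Fin.last i) c x x z)
            + ∑ z, P 0 (Fin.last i) c (x+1) (x+1) z :=
          fin2_sum x (fun x1 => ∑ z, P 0 (Fin.last i) c x1 x1 z)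
        calc ∑ z, |gg P c x i z - ff P c (x+1) 0 z|
            = ∑ z, |P 0 (Fin.last i) c x x z - P 0 (Fin.last i) c (x+1) (x+1) z| := by
              exact Finset.sum_congr rfl fun z _ => by rw [key z]
          _ ≤ ∑ z, (P 0 (Fin.last i) c x x z + P 0 (Fin.last i) c (x+1) (x+1) z) :=
              Finset.sum_le_sum fun z _ =>
                abs_sub_le_add _ _ (hP0 _ _ _ _ _ _) (hP0 _ _ _ _ _ _)
          _ = TT P c := by rw [Finset.sum_add_distrib, hT]
  · -- big half
    rcases Nat.even_or_odd m with ⟨i0, hi0⟩ | ⟨i0, hi0⟩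
    · -- even big : E edge barred
      have hm2 : m = 2*N+2+2*(i0-(N+1)) := by omega
      set i := i0 - (N+1) with hidef
      have hiN : i ≤ N := by omega
      rw [hm2, show 2*N+2+2*i+1 = 2*N+2+(2*i+1) by ring, uu_even_big P c x i,
        uu_odd_big P c x i, ee_shift P c (2*i) (by omega), ee_even P c i hiN]
      refine offdiag_bound P c (↑i) (↑i) _ _ (x+1) x (fin2_add11 x).symm hP0 fun z => ?_
      have h1 : ff P c (x+1) i z = P ↑i ↑i c (x+1) (x+1) z + P ↑i ↑i c (x+1) x z := by
        have := fin2_sum (x+1) (fun y => P (↑i : Fin (N+1)) ↑i c (x+1) y z)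
        rwa [fin2_add11 x] at this
      have h2 : gg P c (x+1) i z = P ↑i ↑i c (x+1) (x+1) z + P ↑i ↑i c x (x+1) z := by
        have := fin2_sum (x+1) (fun t => P (↑i : Fin (N+1)) ↑i c t (x+1) z)
        rwa [fin2_add11 x] at this
      rw [h1, h2]; ring
    · -- odd big : F edge barred
      have hm2 : m = 2*N+2+(2*(i0-(N+1))+1) := by omega
      set i := i0 - (N+1) with hidef
      have hiN : i < N := by omega
      rw [hm2, show 2*N+2+(2*i+1)+1 = 2*N+2+2*(i+1) by ring, uu_odd_big P c x i,
        uu_even_big P c x (i+1), ee_shift P c (2*i+1) (by omega), ee_odd P c i hiN]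
      refine offdiag_bound P c (↑(i+1)) (↑i) _ _ x (x+1) rfl hP0 fun z => ?_
      have h1 : gg P c (x+1) i z
          = P ↑(i+1) ↑i c (x+1) (x+1) z + P ↑(i+1) ↑i c x (x+1) z := by
        have h0 := hNS3 (↑i) (↑(i+1)) (↑i) c (x+1) z
        have h2 : (∑ x', P (↑(i+1) : Fin (N+1)) ↑i c x' (x+1) z)
            = P ↑(i+1) ↑i c (x+1) (x+1) z + P ↑(i+1) ↑i c x (x+1) z := by
          have := fin2_sum (x+1) (fun t => P (↑(i+1) : Fin (N+1)) ↑i c t (x+1) z)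
          rwa [fin2_add11 x] at this
        rw [gg, h0, h2]
      have h3 : ff P c (x+1) (i+1) z
          = P ↑(i+1) ↑i c (x+1) (x+1) z + P ↑(i+1) ↑i c (x+1) x z := by
        have h0 := hNS2 (↑(i+1)) (↑(i+1)) (↑i) c (x+1) z
        have h4 : (∑ y, P (↑(i+1) : Fin (N+1)) ↑i c (x+1) y z)
            = P ↑(i+1) ↑i c (x+1) (x+1) z + P ↑(i+1) ↑i c (x+1) x z := by
          have := fin2_sum (x+1) (fun y => P (↑(i+1) : Fin (N+1)) ↑i c (x+1) y z)
          rwa [fin2_add11 x] at this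
        rw [ff, h0, h4]
      rw [h1, h3]; ring

end ChainedBellEdges
theorem nonsignalling_chained_bell_privacy_bound
    {N : ℕ} {γ ζ : Type*} [Fintype γ] [Fintype ζ]
    (P : Fin (N + 1) → Fin (N + 1) → γ → Fin 2 → Fin 2 → ζ → ℝ)
    (hP0 : ∀ a b c x y z, 0 ≤ P a b c x y z)
    (hP1 : ∀ a b c, ∑ x, ∑ y, ∑ z, P a b c x y z = 1)
    -- non-signalling: P_{XY|ABC} = P_{XY|AB}
    (hNS1 : ∀ a b c c' x y, ∑ z, P a b c x y z = ∑ z, P a b c' x y z)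
    -- non-signalling: P_{XZ|ABC} = P_{XZ|AC}
    (hNS2 : ∀ a b b' c x z, ∑ y, P a b c x y z = ∑ y, P a b' c x y z)
    -- non-signalling: P_{YZ|ABC} = P_{YZ|BC}
    (hNS3 : ∀ a a' b c y z, ∑ x, P a b c x y z = ∑ x, P a' b c x y z) :
    ∀ a b c x, (0 < ∑ y, ∑ z, P a b c x y z) →
      varDist
        (fun z => (∑ y, P a b c x y z) / (∑ y, ∑ z', P a b c x y z'))
        (fun z => ∑ x', ∑ y, P a b c x' y z) ≤
      chainedBell (fun a' b' x' y' => ∑ z, P a' b' c x' y' z) := by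
  intro a b c x hpos
  set j : ℕ := (a : ℕ) with hjdef
  have hj : j ≤ N := by have := a.isLt; omega
  have hcast : ((j : ℕ) : Fin (N+1)) = a := Fin.cast_val_eq_self a
  -- identification of marginals
  have hfz : ∀ z, (∑ y, P a b c x y z) = ff P c x j z := by
    intro z
    rw [ff, hcast]
    exact hNS2 a b a c x z
  have hfz' : ∀ z, (∑ y, P a b c (x+1) y z) = ff P c (x+1) j z := by
    intro z
    rw [ff, hcast]
    exact hNS2 a b a c (x+1) z
  have hmarg : ∀ z, (∑ x', ∑ y, P a b c x' y z) = ff P c x j z + ff P c (x+1) j z := by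
    intro z
    have := fin2_sum x (fun x' => ∑ y, P a b c x' y z)
    rw [this, hfz z, hfz' z]
  set p := ∑ z, ff P c x j z with hpdef
  set q := ∑ z, ff P c (x+1) j z with hqdef
  have hp : 0 < p := by
    have he : (∑ y, ∑ z, P a b c x y z) = p := by
      rw [Finset.sum_comm, hpdef]
      exact Finset.sum_congr rfl fun z _ => hfz z
    rwa [he] at hpos
  have hpq : p + q = 1 := by
    calc p + q = ∑ z, (∑ x', ∑ y, P a b c x' y z) := by
          rw [hpdef, hqdef, ← Finset.sum_add_distrib]
          exact Finset.sum_congr rfl fun z _ => (hmarg z).symm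
      _ = ∑ x', ∑ y, ∑ z, P a b c x' y z := by
          rw [Finset.sum_comm]
          exact Finset.sum_congr rfl fun x' _ => Finset.sum_comm
      _ = 1 := hP1 a b c
  have hden : (∑ y, ∑ z', P a b c x y z') = p := by
    rw [Finset.sum_comm, hpdef]
    exact Finset.sum_congr rfl fun z _ => hfz z
  -- the chained bound on the distance between the two conditional marginals
  have hchain : (∑ z, |ff P c x j z - ff P c (x+1) j z|)
      ≤ TT P c + (∑ i ∈ Finset.range (N+1), EE P c i) + (∑ i ∈ Finset.range N, FF P c i) := by
    have h1 := chainD (uu P c x) (ee P c) (2*j) (2*N+2+2*j) (by omega)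
      (fun m hm hm' => edge_bound P c x hP0 hNS2 hNS3 m (by omega))
    rw [uu_even_small P c x j hj, uu_even_big P c x j] at h1
    have h2 : ∑ m ∈ Finset.Ico (2*j) (2*N+2+2*j), ee P c m
        = ∑ m ∈ Finset.range (2*N+2), ee P c m := by
      rw [show 2*N+2+2*j = 2*j+(2*N+2) by ring]
      exact sum_Ico_shift (ee P c) (2*N+2) (2*j) (fun i hi => ee_shift P c i (by omega))
    have h3 : ∑ m ∈ Finset.range (2*N+2), ee P c m
        = TT P c + (∑ i ∈ Finset.range (N+1), EE P c i) + (∑ i ∈ Finset.range N, FF P c i) := by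
      rw [show 2*N+2 = 2*(N+1) by ring, sum_range_two_mul, Finset.sum_add_distrib]
      have hE : ∑ i ∈ Finset.range (N+1), ee P c (2*i) = ∑ i ∈ Finset.range (N+1), EE P c i :=
        Finset.sum_congr rfl fun i hi => ee_even P c i (by
          have := Finset.mem_range.mp hi; omega)
      have hF : ∑ i ∈ Finset.range (N+1), ee P c (2*i+1)
          = (∑ i ∈ Finset.range N, FF P c i) + TT P c := by
        rw [Finset.sum_range_succ, ee_anchor]
        congr 1
        exact Finset.sum_congr rfl fun i hi => ee_odd P c i (Finset.mem_range.mp hi)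
      rw [hE, hF]; ring
    rw [h2, h3] at h1
    exact h1
  -- identify the right-hand side
  have hRHS : chainedBell (fun a' b' x' y' => ∑ z, P a' b' c x' y' z)
      = TT P c + (∑ i ∈ Finset.range (N+1), EE P c i) + (∑ i ∈ Finset.range N, FF P c i) := by
    have hEe : (∑ i ∈ Finset.range (N+1), EE P c i)
        = ∑ i : Fin (N+1), ∑ x1, ∑ y1, (if x1 ≠ y1 then ∑ z, P i i c x1 y1 z else 0) := by
      rw [← Fin.sum_univ_eq_sum_range (fun i => EE P c i) (N+1)]
      refine Finset.sum_congr rfl fun i _ => ?_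
      rw [EE, Fin.cast_val_eq_self i]
    have hFe : (∑ i ∈ Finset.range N, FF P c i)
        = ∑ i : Fin N, ∑ x1, ∑ y1, (if x1 ≠ y1 then ∑ z, P i.succ i.castSucc c x1 y1 z else 0) := by
      rw [← Fin.sum_univ_eq_sum_range (fun i => FF P c i) N]
      refine Finset.sum_congr rfl fun i _ => ?_
      rw [FF]
      have e1 : ((i.val+1 : ℕ) : Fin (N+1)) = i.succ := by
        ext; rw [Fin.val_natCast]; exact Nat.mod_eq_of_lt (by omega)
      have e2 : ((i.val : ℕ) : Fin (N+1)) = i.castSucc := by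
        ext; rw [Fin.val_natCast]; exact Nat.mod_eq_of_lt (by omega)
      rw [e1, e2]
    rw [chainedBell, hEe, hFe, TT]
  rw [hRHS]
  -- final variational-distance computation
  set Δ := ∑ z, |ff P c x j z - ff P c (x+1) j z| with hΔdef
  have hdq : |p - q| ≤ Δ := by
    have he : p - q = ∑ z, (ff P c x j z - ff P c (x+1) j z) := by
      rw [Finset.sum_sub_distrib]
    rw [he]
    exact Finset.abs_sum_le_sum_abs _ _
  have hf0 : ∀ z, 0 ≤ ff P c x j z := fun z =>
    Finset.sum_nonneg fun y _ => hP0 _ _ _ _ _ _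
  have hq' : q = 1 - p := by linarith
  have hkey : (∑ z, |q * ff P c x j z - p * ff P c (x+1) j z|) ≤ 2 * p * Δ := by
    calc (∑ z, |q * ff P c x j z - p * ff P c (x+1) j z|)
        ≤ ∑ z, (p * |ff P c x j z - ff P c (x+1) j z| + |p - q| * ff P c x j z) := by
          refine Finset.sum_le_sum fun z _ => ?_
          have hrw : q * ff P c x j z - p * ff P c (x+1) j z
              = p * (ff P c x j z - ff P c (x+1) j z) - (p - q) * ff P c x j z := by ring
          rw [hrw]
          calc |p * (ff P c x j z - ff P c (x+1) j z) - (p - q) * ff P c x j z|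
              ≤ |p * (ff P c x j z - ff P c (x+1) j z)| + |(p - q) * ff P c x j z| :=
                abs_sub _ _
            _ = p * |ff P c x j z - ff P c (x+1) j z| + |p - q| * ff P c x j z := by
                rw [abs_mul, abs_mul, abs_of_pos hp, abs_of_nonneg (hf0 z)]
      _ = p * Δ + |p - q| * p := by
          rw [Finset.sum_add_distrib, ← Finset.mul_sum, ← Finset.mul_sum, hΔdef, hpdef]
      _ ≤ p * Δ + Δ * p := by
          have := mul_le_mul_of_nonneg_right hdq hp.le
          linarith
      _ = 2 * p * Δ := by ring
  calc varDist (fun z => (∑ y, P a b c x y z) / (∑ y, ∑ z', P a b c x y z'))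
        (fun z => ∑ x', ∑ y, P a b c x' y z)
      = (1/2) * ∑ z, ((1/p) * |q * ff P c x j z - p * ff P c (x+1) j z|) := by
        rw [varDist]
        congr 1
        refine Finset.sum_congr rfl fun z _ => ?_
        rw [hden, hmarg z, hfz z]
        have hstep : ff P c x j z / p - (ff P c x j z + ff P c (x+1) j z)
            = (1/p) * (q * ff P c x j z - p * ff P c (x+1) j z) := by
          rw [hq']
          field_simp
          ring
        rw [hstep, abs_mul, abs_of_pos (by positivity : (0:ℝ) < 1/p)]
    _ = (1/(2*p)) * ∑ z, |q * ff P c x j z - p * ff P c (x+1) j z| := by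
        rw [← Finset.mul_sum]; ring
    _ ≤ (1/(2*p)) * (2 * p * Δ) :=
        mul_le_mul_of_nonneg_left hkey (by positivity)
    _ = Δ := by field_simp
    _ ≤ _ := hchain
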